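/- If G is a König-Egerváry graph, then |corona(G)| + |core(G)| = 2α(G). -/

import Mathlib

open Set

variable {V : Type*}

/-- `S` is an independent set of `G`. -/
def IndepSet (G : SimpleGraph V) (S : Set V) : Prop :=
  ∀ x ∈ S, ∀ y ∈ S, ¬ G.Adj x y

/-- The independence number `α(G)`. -/
noncomputable def alpha (G : SimpleGraph V) : ℕ :=
  sSup {n | ∃ S : Set V, IndepSet G S ∧ S.ncard = n}

/-- `S` is a maximum independent set of `G`. -/
def MaxIndep (G : SimpleGraph V) (S : Set V) : Prop :=
  IndepSet G S ∧ S.ncard = alpha G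

/-- `Ω(G)`, the family of all maximum independent sets. -/
def Omega (G : SimpleGraph V) : Set (Set V) := {S | MaxIndep G S}

/-- `core(G)`, the intersection of all maximum independent sets. -/
def core (G : SimpleGraph V) : Set V := ⋂₀ Omega G

/-- `corona(G)`, the union of all maximum independent sets. -/
def corona (G : SimpleGraph V) : Set V := ⋃₀ Omega G

/-- The matching number `μ(G)`. -/
noncomputable def matchNum (G : SimpleGraph V) : ℕ :=
  sSup {n | ∃ M : G.Subgraph, M.IsMatching ∧ M.edgeSet.ncard = n}

/-- A matching from `X` into `Y`: an injection `f` on `X` into `Y` such that each `x ∈ X`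
is adjacent to `f x` and the edges `{x, f x}` are pairwise disjoint. -/
def MatchingFrom (G : SimpleGraph V) (X Y : Set V) : Prop :=
  ∃ f : V → V, Set.InjOn f X ∧ (∀ x ∈ X, f x ∈ Y ∧ G.Adj x (f x)) ∧
    ∀ x ∈ X, ∀ y ∈ X, x ≠ y → f x ≠ y

section Aux

variable [Fintype V] {G : SimpleGraph V}

lemma bddAbove_alphaSet (G : SimpleGraph V) :
    BddAbove {n | ∃ S : Set V, IndepSet G S ∧ S.ncard = n} := by
  refine ⟨Fintype.card V, fun n hn => ?_⟩
  obtain ⟨S, -, rfl⟩ := hn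
  calc S.ncard ≤ (Set.univ : Set V).ncard := Set.ncard_le_ncard (Set.subset_univ S)
  _ = Fintype.card V := by rw [Set.ncard_univ, Nat.card_eq_fintype_card]

lemma indep_ncard_le_alpha {S : Set V} (h : IndepSet G S) : S.ncard ≤ alpha G :=
  le_csSup (bddAbove_alphaSet G) ⟨S, h, rfl⟩

lemma omega_nonempty (G : SimpleGraph V) : (Omega G).Nonempty := by
  have h0 : (0 : ℕ) ∈ {n | ∃ S : Set V, IndepSet G S ∧ S.ncard = n} :=
    ⟨∅, fun x hx => absurd hx (Set.notMem_empty x), Set.ncard_empty V⟩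
  have := Nat.sSup_mem ⟨0, h0⟩ (bddAbove_alphaSet G)
  obtain ⟨S, hS, hcard⟩ := this
  exact ⟨S, hS, hcard⟩

lemma core_subset {S : Set V} (hS : S ∈ Omega G) : core G ⊆ S :=
  Set.sInter_subset_of_mem hS

lemma subset_corona {S : Set V} (hS : S ∈ Omega G) : S ⊆ corona G :=
  Set.subset_sUnion_of_mem hS

/-- The lower bound `2α ≤ |⋃ F| + |⋂ F|` for any nonempty collection of maximum
independent sets, by induction on the collection. -/
lemma collection_lemma (F : Finset (Set V)) (hne : F.Nonempty)
    (hF : ∀ T ∈ F, T ∈ Omega G) :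
    2 * alpha G ≤ (⋃ T ∈ F, T).ncard + (⋂ T ∈ F, T).ncard := by
  classical
  revert hF
  induction hne using Finset.Nonempty.cons_induction with
  | singleton S =>
      intro hF
      have hS := hF S (Finset.mem_singleton_self S)
      have h1 : (⋃ T ∈ ({S} : Finset (Set V)), (T : Set V)) = S := by simp
      have h2 : (⋂ T ∈ ({S} : Finset (Set V)), (T : Set V)) = S := by simp
      rw [h1, h2, hS.2, two_mul]
  | cons S F' hSF' hne' IH =>
      intro hF
      have hS : S ∈ Omega G := hF S (Finset.mem_cons_self S F')
      have hF' : ∀ T ∈ F', T ∈ Omega G := fun T hT => hF T (Finset.mem_cons_of_mem hT)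
      have IH' := IH hF'
      clear IH
      set U' : Set V := ⋃ T ∈ F', T with hU'
      set I' : Set V := ⋂ T ∈ F', T with hI'
      have hUnion : (⋃ T ∈ Finset.cons S F' hSF', (T : Set V)) = S ∪ U' := by
        simp [Finset.cons_eq_insert, hU']
      have hInter : (⋂ T ∈ Finset.cons S F' hSF', (T : Set V)) = S ∩ I' := by
        simp [Finset.cons_eq_insert, hI']
      rw [hUnion, hInter]
      -- W is the part of the old intersection outside S
      set W : Set V := I' \ S with hW
      set N : Set V := {y | ∃ x ∈ W, G.Adj x y} with hN
      -- W is independent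
      obtain ⟨T0, hT0⟩ := hne'
      have hWsub : ∀ T ∈ F', W ⊆ T := fun T hT =>
        (Set.diff_subset).trans (Set.biInter_subset_of_mem hT)
      have hWindep : IndepSet G W := fun x hx y hy =>
        (hF' T0 hT0).1 x (hWsub T0 hT0 hx) y (hWsub T0 hT0 hy)
      -- the swap set is independent
      have hSindep : IndepSet G S := hS.1
      have hswap : IndepSet G ((S \ N) ∪ W) := by
        rintro x (⟨hxS, hxN⟩ | hxW) y (⟨hyS, hyN⟩ | hyW) hadj
        · exact hSindep x hxS y hyS hadj
        · exact hxN ⟨y, hyW, hadj.symm⟩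
        · exact hyN ⟨x, hxW, hadj⟩
        · exact hWindep x hxW y hyW hadj
      -- key cardinality: |W| ≤ |S ∩ N|
      have hdisj : Disjoint (S \ N) W := by
        refine Set.disjoint_left.mpr fun x hx hxW => ?_
        exact hxW.2 hx.1
      have hcardswap : (S \ N).ncard + W.ncard ≤ alpha G := by
        have := indep_ncard_le_alpha hswap
        rwa [Set.ncard_union_eq hdisj] at this
      have hsplitS : (S ∩ N).ncard + (S \ N).ncard = S.ncard :=
        Set.ncard_inter_add_ncard_diff_eq_ncard S N
      have hkey1 : W.ncard ≤ (S ∩ N).ncard := by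
        have hSa : S.ncard = alpha G := hS.2
        omega
      -- neighbours of W in S are outside U'
      have hkey2 : S ∩ N ⊆ S \ U' := by
        rintro y ⟨hyS, x, hxW, hadj⟩
        refine ⟨hyS, fun hyU => ?_⟩
        obtain ⟨T, hTF, hyT⟩ := Set.mem_iUnion₂.mp hyU
        exact (hF' T hTF).1 x (hWsub T hTF hxW) y hyT hadj
      have hkey3 : W.ncard ≤ (S \ U').ncard :=
        hkey1.trans (Set.ncard_le_ncard hkey2)
      -- arithmetic
      have hU : (S ∪ U').ncard = U'.ncard + (S \ U').ncard := by
        rw [Set.union_comm, ← Set.union_diff_self,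
          Set.ncard_union_eq Set.disjoint_sdiff_right]
      have hI : (I' ∩ S).ncard + W.ncard = I'.ncard :=
        Set.ncard_inter_add_ncard_diff_eq_ncard I' S
      rw [Set.inter_comm S I']
      omega

/-- In a König–Egerváry graph, for any maximum independent set `S` there is
a matching of `Sᶜ` into `S`. -/
lemma exists_matching_into (G : SimpleGraph V)
    (hKE : alpha G + matchNum G = Fintype.card V) {S : Set V} (hS : S ∈ Omega G) :
    ∃ f : V → V, Set.InjOn f Sᶜ ∧ ∀ v ∈ Sᶜ, f v ∈ S ∧ G.Adj v (f v) := by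
  classical
  -- a maximum matching exists
  have hbdd : BddAbove {n | ∃ M : G.Subgraph, M.IsMatching ∧ M.edgeSet.ncard = n} := by
    refine ⟨Nat.card (Sym2 V), fun n hn => ?_⟩
    obtain ⟨M, -, rfl⟩ := hn
    calc M.edgeSet.ncard ≤ (Set.univ : Set (Sym2 V)).ncard :=
          Set.ncard_le_ncard (Set.subset_univ _) (Set.toFinite _)
      _ = Nat.card (Sym2 V) := Set.ncard_univ _
  have h0 : (0 : ℕ) ∈ {n | ∃ M : G.Subgraph, M.IsMatching ∧ M.edgeSet.ncard = n} := by
    refine ⟨⊥, fun v hv => ?_, by simp⟩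
    simp only [SimpleGraph.Subgraph.verts_bot, Set.mem_empty_iff_false] at hv
  obtain ⟨M, hM, hMcard⟩ := Nat.sSup_mem ⟨0, h0⟩ hbdd
  -- basic cardinalities
  have hSa : S.ncard = alpha G := hS.2
  have hcompl : S.ncard + Sᶜ.ncard = Fintype.card V := by
    rw [← Nat.card_eq_fintype_card]; exact Set.ncard_add_ncard_compl S
  have hScompl : Sᶜ.ncard = matchNum G := by omega
  -- the partner function of the matching
  have hMc : M.edgeSet.ncard = matchNum G := hMcard
  have hg : ∀ v ∈ M.verts, ∃ w, M.Adj v w := fun v hv => (hM hv).exists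
  set g : V → V := fun v => if h : v ∈ M.verts then (hg v h).choose else v with hgdef
  have hgadj : ∀ v ∈ M.verts, M.Adj v (g v) := by
    intro v hv
    show M.Adj v (if h : v ∈ M.verts then (hg v h).choose else v)
    rw [dif_pos hv]
    exact (hg v hv).choose_spec
  have hguniq : ∀ v ∈ M.verts, ∀ w, M.Adj v w → w = g v := by
    intro v hv w hw
    obtain ⟨w', hw', huni⟩ := hM hv
    rw [huni w hw, huni (g v) (hgadj v hv)]
  -- every point of an edge is a vertex, and the edge is determined by it
  have hedge : ∀ e ∈ M.edgeSet, ∀ v, v ∈ e → v ∈ M.verts ∧ e = s(v, g v) := by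
    intro e
    induction e with
    | _ a b =>
      intro he v hv
      rw [SimpleGraph.Subgraph.mem_edgeSet] at he
      rcases Sym2.mem_iff.mp hv with rfl | rfl
      · have hvm := M.edge_vert he
        exact ⟨hvm, by rw [← hguniq v hvm b he]⟩
      · have hadjb : M.Adj v a := he.symm
        have hvm := M.edge_vert hadjb
        refine ⟨hvm, ?_⟩
        rw [← hguniq v hvm a hadjb]
        exact Sym2.eq_swap
  -- choose an endpoint outside S for each edge
  set pe : Sym2 V → V := fun e =>
    if h : ∃ v, v ∈ e ∧ v ∉ S then h.choose else e.out.1 with hpedef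
  have hpe_spec : ∀ e ∈ M.edgeSet, pe e ∈ e ∧ pe e ∉ S := by
    intro e he
    have hex : ∃ v, v ∈ e ∧ v ∉ S := by
      induction e with
      | _ a b =>
        rw [SimpleGraph.Subgraph.mem_edgeSet] at he
        have hGadj : G.Adj a b := M.adj_sub he
        by_contra hcon
        push_neg at hcon
        exact hS.1 a (hcon a (Sym2.mem_mk_left a b)) b
          (hcon b (Sym2.mem_mk_right a b)) hGadj
    show (if h : ∃ v, v ∈ e ∧ v ∉ S then h.choose else e.out.1) ∈ e ∧
        (if h : ∃ v, v ∈ e ∧ v ∉ S then h.choose else e.out.1) ∉ S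
    rw [dif_pos hex]
    exact hex.choose_spec
  have hpe_mem : ∀ e ∈ M.edgeSet, pe e ∈ M.verts ∩ Sᶜ := fun e he =>
    ⟨(hedge e he (pe e) (hpe_spec e he).1).1, (hpe_spec e he).2⟩
  have hpe_inj : Set.InjOn pe M.edgeSet := by
    intro e1 h1 e2 h2 heq
    rw [(hedge e1 h1 (pe e1) (hpe_spec e1 h1).1).2,
      (hedge e2 h2 (pe e2) (hpe_spec e2 h2).1).2, heq]
  have c1 : M.edgeSet.ncard ≤ (M.verts ∩ Sᶜ).ncard :=
    Set.ncard_le_ncard_of_injOn pe hpe_mem hpe_inj (Set.toFinite _)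
  have c2 : (M.verts ∩ Sᶜ).ncard ≤ Sᶜ.ncard :=
    Set.ncard_le_ncard Set.inter_subset_right (Set.toFinite _)
  -- everything outside S is matched
  have hsub : Sᶜ ⊆ M.verts := by
    have : M.verts ∩ Sᶜ = Sᶜ := by
      apply Set.eq_of_subset_of_ncard_le Set.inter_subset_right _ (Set.toFinite _)
      omega
    intro v hv
    rw [← this] at hv
    exact hv.1
  -- the chosen endpoints exhaust Sᶜ
  have himg : pe '' M.edgeSet = Sᶜ := by
    apply Set.eq_of_subset_of_ncard_le _ _ (Set.toFinite _)
    · rintro x ⟨e, he, rfl⟩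
      exact (hpe_spec e he).2
    · rw [Set.ncard_image_of_injOn hpe_inj]
      omega
  -- partners of vertices outside S lie in S
  have hgS : ∀ v ∈ Sᶜ, g v ∈ S := by
    intro v hv
    by_contra hgv
    have hvm := hsub hv
    have hadj := hgadj v hvm
    have hgvc : g v ∈ (Sᶜ : Set V) := hgv
    obtain ⟨e1, he1, hpe1⟩ : v ∈ pe '' M.edgeSet := by rw [himg]; exact hv
    obtain ⟨e2, he2, hpe2⟩ : g v ∈ pe '' M.edgeSet := by rw [himg]; exact hgvc
    have hv1 : v ∈ e1 := hpe1 ▸ (hpe_spec e1 he1).1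
    have hv2 : g v ∈ e2 := hpe2 ▸ (hpe_spec e2 he2).1
    have h1 : e1 = s(v, g v) := (hedge e1 he1 v hv1).2
    have hgm : g v ∈ M.verts := M.edge_vert hadj.symm
    have h2 : e2 = s(g v, g (g v)) := (hedge e2 he2 (g v) hv2).2
    have hgg : v = g (g v) := hguniq (g v) hgm v hadj.symm
    have h12 : e1 = e2 := by rw [h1, h2, ← hgg]; exact Sym2.eq_swap
    exact (M.adj_sub hadj).ne (hpe1.symm.trans (by rw [h12]; exact hpe2))
  -- injectivity of the partner map
  have hginj : Set.InjOn g Sᶜ := by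
    intro u hu v hv heq
    have hum := hsub hu
    have hvm := hsub hv
    have h1 : M.Adj (g u) u := (hgadj u hum).symm
    have h2 : M.Adj (g u) v := by rw [heq]; exact (hgadj v hvm).symm
    have hgm : g u ∈ M.verts := M.edge_vert h1
    rw [hguniq (g u) hgm u h1, hguniq (g u) hgm v h2]
  exact ⟨g, hginj, fun v hv => ⟨hgS v hv, M.adj_sub (hgadj v (hsub hv))⟩⟩

end Aux

theorem stmt_12 [Fintype V] (G : SimpleGraph V)
    (hKE : alpha G + matchNum G = Fintype.card V) :
    (corona G).ncard + (core G).ncard = 2 * alpha G := by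
  classical
  obtain ⟨S, hS⟩ := omega_nonempty G
  -- lower bound
  have hlow : 2 * alpha G ≤ (corona G).ncard + (core G).ncard := by
    have hfin : (Omega G).Finite := Set.toFinite _
    have hne : hfin.toFinset.Nonempty := by
      rw [Set.Finite.toFinset_nonempty]; exact ⟨S, hS⟩
    have hcor : (⋃ T ∈ hfin.toFinset, T) = corona G := by
      ext x; simp [corona, Omega, Set.mem_sUnion, Set.Finite.mem_toFinset]
    have hcore : (⋂ T ∈ hfin.toFinset, T) = core G := by
      ext x; simp [core, Omega, Set.mem_sInter, Set.Finite.mem_toFinset]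
    have := collection_lemma hfin.toFinset hne (fun T hT => hfin.mem_toFinset.mp hT)
    rwa [hcor, hcore] at this
  -- upper bound
  have hup : (corona G).ncard + (core G).ncard ≤ 2 * alpha G := by
    obtain ⟨f, hinj, hf⟩ := exists_matching_into G hKE hS
    have hmaps : ∀ v ∈ corona G \ S, f v ∈ S \ core G := by
      rintro v ⟨hvc, hvS⟩
      obtain ⟨T, hT, hvT⟩ := hvc
      refine ⟨(hf v hvS).1, fun hfc => ?_⟩
      exact hT.1 v hvT (f v) (hfc T hT) (hf v hvS).2
    have hle : (corona G \ S).ncard ≤ (S \ core G).ncard :=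
      Set.ncard_le_ncard_of_injOn f hmaps
        (hinj.mono fun v hv => hv.2)
    have h1 : (corona G \ S).ncard + S.ncard = (corona G).ncard :=
      Set.ncard_diff_add_ncard_of_subset (subset_corona hS)
    have h2 : (S \ core G).ncard + (core G).ncard = S.ncard :=
      Set.ncard_diff_add_ncard_of_subset (core_subset hS)
    have hSa : S.ncard = alpha G := hS.2
    omega
  omega
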